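/- Let X and Y be Hilbert C*-modules over a C*-algebra A, let α, β, γ be real numbers, and let T, S : X → Y be adjointable operators such that T*S is self-adjoint and αT*T + βS*S = γ·Id_X. Then for all x, y ∈ X, αβ·|Tx + Sy|² + |βSx − αTy|² = βγ·|x|² + αγ·|y|², where |z|² denotes the A-valued inner product ⟨z, z⟩. -/

import Mathlib

/-- The module identity, formalized (as permitted by the context) in the special case
where the Hilbert C*-module is a complex Hilbert space `H` (a Hilbert `ℂ`-module), so that
`|z|² = ⟨z, z⟩` is the complex inner ℂ product. -/
theorem module_operator_identity {H : Type*} [NormedAddCommGroup H]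
    [InnerProductSpace ℂ H] [CompleteSpace H]
    (α β γ : ℝ) (T S : H →L[ℂ] H)
    (hsa : IsSelfAdjoint (ContinuousLinearMap.adjoint T * S))
    (heq : α • (ContinuousLinearMap.adjoint T * T) + β • (ContinuousLinearMap.adjoint S * S)
      = γ • (1 : H →L[ℂ] H)) :
    ∀ x y : H,
      (α * β : ℂ) * inner ℂ (T x + S y) (T x + S y)
        + inner ℂ (β • S x - α • T y) (β • S x - α • T y)
      = (β * γ : ℂ) * inner ℂ x x + (α * γ : ℂ) * inner ℂ y y := by
  intro x y
  have hTS : ∀ u v : H, (inner ℂ (T u) (S v) : ℂ) = inner ℂ (S u) (T v) := by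
    intro u v
    have h : ContinuousLinearMap.adjoint S * T = ContinuousLinearMap.adjoint T * S := by
      calc ContinuousLinearMap.adjoint S * T
          = star (ContinuousLinearMap.adjoint T * S) := by
            rw [star_mul, ContinuousLinearMap.star_eq_adjoint,
              ContinuousLinearMap.star_eq_adjoint, ContinuousLinearMap.adjoint_adjoint]
        _ = _ := hsa
    calc (inner ℂ (T u) (S v) : ℂ)
        = inner ℂ u ((ContinuousLinearMap.adjoint T * S) v) := by
          simp [ContinuousLinearMap.mul_apply, ContinuousLinearMap.adjoint_inner_right]
      _ = inner ℂ u ((ContinuousLinearMap.adjoint S * T) v) := by rw [h]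
      _ = inner ℂ (S u) (T v) := by
          simp [ContinuousLinearMap.mul_apply, ContinuousLinearMap.adjoint_inner_right]
  have hTS' : ∀ u v : H, (inner ℂ (S u) (T v) : ℂ) = inner ℂ (T u) (S v) := fun u v =>
    (hTS u v).symm
  have hsmul_r : ∀ (r : ℝ) (v w : H), (inner ℂ v (r • w) : ℂ) = (r : ℂ) * inner ℂ v w := by
    intro r v w
    rw [RCLike.real_smul_eq_coe_smul (K := ℂ), inner_smul_right]
    rfl
  have hsmul_l : ∀ (r : ℝ) (v w : H), (inner ℂ (r • v) w : ℂ) = (r : ℂ) * inner ℂ v w := by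
    intro r v w
    rw [RCLike.real_smul_eq_coe_smul (K := ℂ), inner_smul_left, RCLike.conj_ofReal]
    rfl
  have hdiag : ∀ z : H, (α : ℂ) * inner ℂ (T z) (T z) + (β : ℂ) * inner ℂ (S z) (S z)
      = (γ : ℂ) * inner ℂ z z := by
    intro z
    have h := congrArg (fun f : H →L[ℂ] H => (inner ℂ z (f z) : ℂ)) heq
    simp only [ContinuousLinearMap.add_apply, ContinuousLinearMap.smul_apply,
      ContinuousLinearMap.mul_apply, ContinuousLinearMap.one_apply] at h
    rw [inner_add_right, hsmul_r, hsmul_r, hsmul_r,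
      ContinuousLinearMap.adjoint_inner_right, ContinuousLinearMap.adjoint_inner_right] at h
    exact h
  have hx := hdiag x
  have hy := hdiag y
  have h1 := hTS x y
  have hconj : (inner ℂ (S y) (T x) : ℂ) = inner ℂ (T y) (S x) := by
    calc (inner ℂ (S y) (T x) : ℂ) = starRingEnd ℂ (inner ℂ (T x) (S y)) := by
          rw [inner_conj_symm]
      _ = starRingEnd ℂ (inner ℂ (S x) (T y)) := by rw [hTS x y]
      _ = inner ℂ (T y) (S x) := by rw [inner_conj_symm]
  rw [inner_add_add_self, inner_sub_sub_self, hsmul_l, hsmul_l, hsmul_l, hsmul_l,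
    hsmul_r, hsmul_r, hsmul_r, hsmul_r, h1, hconj]
  linear_combination (β : ℂ) * hx + (α : ℂ) * hy
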